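/- For each r ≥ 1, there exist infinitely many exponents m such that the decimal representation of 5^m contains at least r consecutive zero digits; in fact, if 5^m has r consecutive zeros ending at digit position k (0-indexed from the right) with k + 1 < m·log₁₀ 5, then so does 5^(m + 2^k) for the same positions. -/

import Mathlib

/-- `5^m` has `r` consecutive zero digits ending at position `k`
(0-indexed from the right), as interior digits. -/
def HasZeros (m r k : ℕ) : Prop :=
  r ≤ k + 1 ∧ 10 ^ (k + 1) ≤ 5 ^ m ∧
    ∀ i : ℕ, k + 1 - r ≤ i → i ≤ k → 5 ^ m / 10 ^ i % 10 = 0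

lemma two_pow_dvd_aux (k : ℕ) : 2 ^ (k + 2) ∣ 5 ^ (2 ^ k) - 1 := by
  induction k with
  | zero => decide
  | succ k ih =>
    have hx : 1 ≤ 5 ^ (2 ^ k) := Nat.one_le_pow _ _ (by norm_num)
    obtain ⟨y, hy⟩ := Nat.exists_eq_add_of_le hx
    have hfact : 5 ^ (2 ^ (k + 1)) - 1 = (5 ^ (2 ^ k) - 1) * (5 ^ (2 ^ k) + 1) := by
      have h1 : 5 ^ (2 ^ (k + 1)) = 5 ^ (2 ^ k) * 5 ^ (2 ^ k) := by
        rw [← pow_add]; ring_nf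
      rw [h1, hy]
      have : (1 + y) * (1 + y) = y * (1 + y + 1) + 1 := by ring
      rw [this]
      simp [Nat.add_sub_cancel]
    rw [hfact]
    have h2 : 2 ∣ 5 ^ (2 ^ k) + 1 := by
      obtain ⟨t, ht⟩ : Odd (5 ^ (2 ^ k)) := Odd.pow (by decide)
      omega
    have : 2 ^ (k + 1 + 2) = 2 ^ (k + 2) * 2 := by ring
    rw [this]
    exact mul_dvd_mul ih h2

lemma pow_five_period (k m : ℕ) (h : k + 1 ≤ m) :
    5 ^ (m + 2 ^ k) ≡ 5 ^ m [MOD 10 ^ (k + 1)] := by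
  have hle : 5 ^ m ≤ 5 ^ (m + 2 ^ k) := Nat.pow_le_pow_right (by norm_num) (Nat.le_add_right _ _)
  rw [Nat.ModEq.comm, Nat.modEq_iff_dvd' hle]
  have hsub : 5 ^ (m + 2 ^ k) - 5 ^ m = 5 ^ m * (5 ^ (2 ^ k) - 1) := by
    have h1 : 5 ^ (m + 2 ^ k) = 5 ^ m * 5 ^ (2 ^ k) := by rw [pow_add]
    have hx : 1 ≤ 5 ^ (2 ^ k) := Nat.one_le_pow _ _ (by norm_num)
    rw [h1, Nat.mul_sub, mul_one]
  rw [hsub]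
  have h10 : (10 : ℕ) ^ (k + 1) = 5 ^ (k + 1) * 2 ^ (k + 1) := by
    rw [← Nat.mul_pow]
  rw [h10]
  exact mul_dvd_mul (pow_dvd_pow 5 h)
    ((pow_dvd_pow 2 (by omega)).trans (two_pow_dvd_aux k))

lemma digit_congr {a b i k : ℕ} (h : a ≡ b [MOD 10 ^ (k + 1)]) (hik : i ≤ k) :
    a / 10 ^ i % 10 = b / 10 ^ i % 10 := by
  have h2 : a ≡ b [MOD 10 ^ (i + 1)] :=
    Nat.ModEq.of_dvd (pow_dvd_pow 10 (by omega)) h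
  have key : ∀ n : ℕ, n / 10 ^ i % 10 = n % (10 ^ i * 10) / 10 ^ i := by
    intro n; rw [Nat.mod_mul_right_div_self]
  rw [key a, key b]
  have : (10 : ℕ) ^ i * 10 = 10 ^ (i + 1) := by rw [pow_succ]
  rw [this, h2]

lemma hasZeros_step (r m k : ℕ) (h : HasZeros m r k) : HasZeros (m + 2 ^ k) r k := by
  obtain ⟨h1, h2, h3⟩ := h
  have hklt : k + 1 < m := by
    have h5 : (5 : ℕ) ^ (k + 1) < 10 ^ (k + 1) :=
      Nat.pow_lt_pow_left (by norm_num) (by omega)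
    have : (5 : ℕ) ^ (k + 1) < 5 ^ m := lt_of_lt_of_le h5 h2
    exact (Nat.pow_lt_pow_iff_right (by norm_num)).mp this
  have hper := pow_five_period k m (by omega)
  refine ⟨h1, le_trans h2 (Nat.pow_le_pow_right (by norm_num) (Nat.le_add_right _ _)), ?_⟩
  intro i hi1 hi2
  rw [digit_congr hper hi2]
  exact h3 i hi1 hi2

lemma hasZeros_base (r : ℕ) (hr : 1 ≤ r) :
    HasZeros (7 * r + 2 ^ (7 * r - 1)) r (7 * r - 1) := by
  set k := 7 * r - 1 with hk
  have hk1 : k + 1 = 7 * r := by omega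
  have hexp : 2 ^ (7 * r - 1) ≥ 7 * r := by
    have := Nat.lt_two_pow_self (n := 7 * r - 1)
    omega
  have hm : 7 * r + 2 ^ (7 * r - 1) = (k + 1) + 2 ^ k := by rw [hk1]
  have hper : 5 ^ ((k + 1) + 2 ^ k) ≡ 5 ^ (k + 1) [MOD 10 ^ (k + 1)] :=
    pow_five_period k (k + 1) le_rfl
  have hsmall : (5 : ℕ) ^ (7 * r) < 10 ^ (5 * r) := by
    have h1 : (5 : ℕ) ^ (7 * r) = (5 ^ 7) ^ r := by rw [← pow_mul, mul_comm]
    have h2 : (10 : ℕ) ^ (5 * r) = (10 ^ 5) ^ r := by rw [← pow_mul, mul_comm]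
    rw [h1, h2]
    exact Nat.pow_lt_pow_left (by norm_num) (by omega)
  refine ⟨by omega, ?_, ?_⟩
  · -- 10^(k+1) ≤ 5^m
    have h1 : (10 : ℕ) ^ (k + 1) ≤ 5 ^ (2 * (k + 1)) := by
      have : (10 : ℕ) ^ (k + 1) ≤ 25 ^ (k + 1) := Nat.pow_le_pow_left (by norm_num) _
      rw [pow_mul]; norm_num; exact this
    refine le_trans h1 (Nat.pow_le_pow_right (by norm_num) ?_)
    omega
  · intro i hi1 hi2
    rw [hm, digit_congr hper hi2]
    have hi5 : 10 ^ (5 * r) ≤ 10 ^ i := by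
      refine Nat.pow_le_pow_right (by norm_num) ?_
      omega
    have hlt : (5 : ℕ) ^ (k + 1) < 10 ^ i := by
      rw [hk1]; exact lt_of_lt_of_le hsmall hi5
    rw [Nat.div_eq_of_lt hlt]

theorem infinitely_many_pow_five_with_zeros (r : ℕ) (hr : 1 ≤ r) :
    {m : ℕ | ∃ k : ℕ, HasZeros m r k}.Infinite ∧
    ∀ m k : ℕ, HasZeros m r k → ((k : ℝ) + 1 < (m : ℝ) * Real.logb 10 5 →
      HasZeros (m + 2 ^ k) r k) := by
  constructor
  · set m₀ := 7 * r + 2 ^ (7 * r - 1) with hm₀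
    set k₀ := 7 * r - 1 with hk₀
    have hbase : HasZeros m₀ r k₀ := hasZeros_base r hr
    have hall : ∀ n : ℕ, HasZeros (m₀ + n * 2 ^ k₀) r k₀ := by
      intro n
      induction n with
      | zero => simpa using hbase
      | succ n ih =>
        have : m₀ + (n + 1) * 2 ^ k₀ = (m₀ + n * 2 ^ k₀) + 2 ^ k₀ := by ring
        rw [this]
        exact hasZeros_step r _ k₀ ih
    apply Set.infinite_of_injective_forall_mem
      (f := fun n : ℕ => m₀ + n * 2 ^ k₀)
    · intro a b hab
      have hab' := Nat.add_left_cancel hab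
      have hpos : 0 < 2 ^ k₀ := Nat.pow_pos (by norm_num)
      exact Nat.eq_of_mul_eq_mul_right hpos hab'
    · intro n
      exact ⟨k₀, hall n⟩
  · intro m k h _
    exact hasZeros_step r m k h
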